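/- Let G be a finite connected weighted graph, π: C_1(G,ℝ) → H_1(G,ℝ) the orthogonal projection, and e an edge. Define the Foster coefficient F(e) = ‖π(e)‖_sup (the maximum absolute value of the coefficients of π(e) in the edge basis). Then F(e) equals the diagonal coefficient a of e in π(e), and F(e) = (1/w(G)) · Σ_{T: e ∉ E(T)} w(T), i.e., the weighted fraction of spanning trees not containing e. -/

import Mathlib

/-- A finite weighted (multi)graph with a fixed orientation of the edges:
vertex type `V`, edge type `E`, tail/head maps and a positive length function. -/
structure WGraph where
  V : Type
  E : Type
  [fV : Fintype V]
  [fE : Fintype E]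
  [dV : DecidableEq V]
  [dE : DecidableEq E]
  tail : E → V
  head : E → V
  len : E → ℝ
  len_pos : ∀ e, 0 < len e

attribute [instance] WGraph.fV WGraph.fE WGraph.dV WGraph.dE

namespace WGraph

variable (G : WGraph)

/-- Two vertices are adjacent if some edge joins them (in either direction). -/
def Adj (x y : G.V) : Prop :=
  ∃ e, (G.tail e = x ∧ G.head e = y) ∨ (G.tail e = y ∧ G.head e = x)

/-- A weighted graph is connected if any two vertices are joined by a walk. -/
def Connected : Prop := ∀ x y : G.V, Relation.ReflTransGen G.Adj x y

/-- The differential `d : C_0(G,ℝ) → C_1(G,ℝ)`, `(df)(e) = (f(e⁺) - f(e⁻))/ℓ(e)`. -/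
noncomputable def d (f : G.V → ℝ) : G.E → ℝ :=
  fun e => (f (G.head e) - f (G.tail e)) / G.len e

/-- The adjoint `d* : C_1(G,ℝ) → C_0(G,ℝ)`,
`(d*α)(x) = Σ_{e⁺ = x} α(e) - Σ_{e⁻ = x} α(e)`. -/
def dStar (α : G.E → ℝ) : G.V → ℝ := fun x =>
  (∑ e ∈ Finset.univ.filter fun e => G.head e = x, α e) -
    ∑ e ∈ Finset.univ.filter fun e => G.tail e = x, α e

/-- The inner product `⟨α,β⟩ = Σ_e α(e) β(e) ℓ(e)` on real 1-chains. -/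
noncomputable def ip (α β : G.E → ℝ) : ℝ := ∑ e, α e * β e * G.len e

/-- Real 1-cycles: the kernel of `d*`. -/
def IsCycle (α : G.E → ℝ) : Prop := ∀ x, G.dStar α x = 0

/-- Exact 1-chains: the image of `d`. -/
def IsExact (α : G.E → ℝ) : Prop := ∃ f : G.V → ℝ, α = G.d f

/-- A 1-form `ω = Σ ω_e de` (recorded by its coefficients) is harmonic if at every
vertex the incoming and outgoing coefficients sum to the same value. -/
def Harmonic (ω : G.E → ℝ) : Prop :=
  ∀ x, (∑ e ∈ Finset.univ.filter fun e => G.head e = x, ω e) =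
    ∑ e ∈ Finset.univ.filter fun e => G.tail e = x, ω e

/-- Integration of the 1-form `ω` along the 1-chain `α`: `∫_α ω = Σ_e ω_e α(e) ℓ(e)`. -/
noncomputable def intPair (ω α : G.E → ℝ) : ℝ := ∑ e, ω e * α e * G.len e

/-- `d*` on integral 1-chains. -/
def dStarZ (α : G.E → ℤ) : G.V → ℤ := fun x =>
  (∑ e ∈ Finset.univ.filter fun e => G.head e = x, α e) -
    ∑ e ∈ Finset.univ.filter fun e => G.tail e = x, α e

/-- Integral 1-cycles. -/
def IsCycleZ (α : G.E → ℤ) : Prop := ∀ x, G.dStarZ α x = 0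

/-- `α ∈ im(d)_ℤ`: `α` is an integral 1-chain which is the differential of a real
function on the vertices (a function with integer slopes). -/
def IsExactZ (α : G.E → ℤ) : Prop :=
  ∃ f : G.V → ℝ, ∀ e, (α e : ℝ) = G.d f e

/-- The subgroup `H_1(G,ℤ) ⊕ im(d)_ℤ` of `C_1(G,ℤ)`, i.e. the subgroup generated by
integral cycles together with integral exact chains. -/
def jacRel : AddSubgroup (G.E → ℤ) :=
  AddSubgroup.closure {α | G.IsCycleZ α ∨ G.IsExactZ α}

/-- The Jacobian group of a weighted graph: `J(G) = C_1(G,ℤ)/(H_1(G,ℤ) ⊕ im(d)_ℤ)`. -/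
def Jac := (G.E → ℤ) ⧸ G.jacRel

noncomputable instance : AddCommGroup G.Jac :=
  inferInstanceAs (AddCommGroup ((G.E → ℤ) ⧸ G.jacRel))

/-- Divisors of degree zero. -/
def Div0 : AddSubgroup (G.V → ℤ) where
  carrier := {D | ∑ x, D x = 0}
  add_mem' := by
    intro a b ha hb
    simp only [Set.mem_setOf_eq] at *
    simp [Finset.sum_add_distrib, ha, hb]
  zero_mem' := by simp
  neg_mem' := by
    intro a ha
    simp only [Set.mem_setOf_eq] at *
    simp [ha]

/-- `d*` as a group homomorphism on integral 1-chains. -/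
def dStarZHom : (G.E → ℤ) →+ (G.V → ℤ) where
  toFun := G.dStarZ
  map_zero' := by funext x; simp [dStarZ]
  map_add' := by
    intro a b
    funext x
    simp [dStarZ, Finset.sum_add_distrib]
    ring

/-- The subgroup `im(d)_ℤ` of `C_1(G,ℤ)`. -/
def imdZ : AddSubgroup (G.E → ℤ) where
  carrier := {α | G.IsExactZ α}
  add_mem' := by
    rintro a b ⟨f, hf⟩ ⟨g, hg⟩
    exact ⟨f + g, fun e => by
      simp only [Pi.add_apply, Int.cast_add, hf e, hg e, d]; ring⟩
  zero_mem' := ⟨0, fun e => by simp [d]⟩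
  neg_mem' := by
    rintro a ⟨f, hf⟩
    exact ⟨-f, fun e => by
      simp only [Pi.neg_apply, Int.cast_neg, hf e, d]; ring⟩

/-- Principal divisors: `Prin(G) = d*(im(d)_ℤ)`. -/
def Prin : AddSubgroup (G.V → ℤ) := G.imdZ.map G.dStarZHom

lemma sum_dStarZ (α : G.E → ℤ) : ∑ x, G.dStarZ α x = 0 := by
  simp only [dStarZ, Finset.sum_sub_distrib]
  rw [Finset.sum_fiberwise, Finset.sum_fiberwise]
  simp

/-- The degree-zero Picard group `Pic(G) = Div⁰(G)/Prin(G)`. -/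
def PicZ := G.Div0 ⧸ (G.Prin.addSubgroupOf G.Div0)

noncomputable instance : AddCommGroup G.PicZ :=
  inferInstanceAs (AddCommGroup (G.Div0 ⧸ (G.Prin.addSubgroupOf G.Div0)))

/-- The weighted graph obtained by deleting the edge `e₀`. -/
def delEdge (e₀ : G.E) : WGraph where
  V := G.V
  E := {e : G.E // e ≠ e₀}
  tail := fun e => G.tail e.1
  head := fun e => G.head e.1
  len := fun e => G.len e.1
  len_pos := fun e => G.len_pos e.1

/-- An edge is a bridge if deleting it disconnects the graph. -/
def IsBridge (e₀ : G.E) : Prop := ¬ (G.delEdge e₀).Connected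

/-- The weighted graph obtained by deleting a vertex `z` (and all incident edges). -/
def delVertex (z : G.V) : WGraph where
  V := {x : G.V // x ≠ z}
  E := {e : G.E // G.tail e ≠ z ∧ G.head e ≠ z}
  tail := fun e => ⟨G.tail e.1, e.2.1⟩
  head := fun e => ⟨G.head e.1, e.2.2⟩
  len := fun e => G.len e.1
  len_pos := fun e => G.len_pos e.1

open scoped Classical in
/-- The (discrete) potential kernel: `jKer z y` is the function `f` with `f(z) = 0`
and `Δf = δ_y - δ_z` (when such a function exists; it is unique on a
connected graph). -/
noncomputable def jKer (z y : G.V) : G.V → ℝ :=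
  if h : ∃ f : G.V → ℝ, f z = 0 ∧ ∀ w, G.dStar (G.d f) w =
      (if w = y then 1 else 0) - (if w = z then 1 else 0)
  then h.choose else 0

/-- Connectivity using only the edges in `S`. -/
def ConnectedOn (S : Finset G.E) : Prop :=
  ∀ x y : G.V, Relation.ReflTransGen
    (fun a b => ∃ e ∈ S, (G.tail e = a ∧ G.head e = b) ∨ (G.tail e = b ∧ G.head e = a)) x y

/-- A spanning tree: a spanning connected edge set with `#V - 1` edges. -/
def IsSpanningTree (T : Finset G.E) : Prop :=
  G.ConnectedOn T ∧ T.card + 1 = Fintype.card G.V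

/-- The weight `w(T) = Π_{e ∉ T} ℓ(e)` of a spanning tree. -/
noncomputable def wt (T : Finset G.E) : ℝ := ∏ e ∈ Finset.univ \ T, G.len e

open scoped Classical in
/-- `w(G) = Σ_T w(T)`, summed over all spanning trees. -/
noncomputable def wG : ℝ := ∑ T : Finset G.E, if G.IsSpanningTree T then G.wt T else 0

open scoped Classical in
/-- The Foster coefficient `F(e) = (1/w(G)) Σ_{T : e ∉ T} w(T)`. -/
noncomputable def foster (e : G.E) : ℝ :=
  (1 / G.wG) * ∑ T : Finset G.E, if G.IsSpanningTree T ∧ e ∉ T then G.wt T else 0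

open scoped Classical in
/-- The fundamental cycle `α_{T,e}`: the unique 1-cycle supported on `T ∪ {e}` taking
the value `1` on `e`; by convention it is `0` when no such cycle exists
(e.g. when `e ∈ T`). -/
noncomputable def fundCycle (T : Finset G.E) (e : G.E) : G.E → ℝ :=
  if h : ∃ α : G.E → ℝ, G.IsCycle α ∧ α e = 1 ∧ ∀ f, f ∉ T → f ≠ e → α f = 0
  then h.choose else 0

end WGraph

namespace WGraph

variable (G : WGraph)

-- ===== auxiliary development =====

/-- single step using an edge in `S` -/
def estep (S : Finset G.E) (a b : G.V) : Prop :=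
  ∃ e ∈ S, (G.tail e = a ∧ G.head e = b) ∨ (G.tail e = b ∧ G.head e = a)

/-- reachability via edges in `S` -/
def reach (S : Finset G.E) : G.V → G.V → Prop := Relation.ReflTransGen (G.estep S)

lemma connectedOn_iff (S : Finset G.E) : G.ConnectedOn S ↔ ∀ x y, G.reach S x y := Iff.rfl

lemma estep_symm {S : Finset G.E} : Symmetric (G.estep S) := by
  rintro a b ⟨k, hk, h | h⟩
  · exact ⟨k, hk, Or.inr h⟩
  · exact ⟨k, hk, Or.inl h⟩

lemma reach_symm {S : Finset G.E} {x y : G.V} (h : G.reach S x y) : G.reach S y x :=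
  by
    haveI : Std.Symm (G.estep S) := ⟨fun _ _ h => G.estep_symm h⟩
    exact (Relation.ReflTransGen.symmetric (r := G.estep S)).symm _ _ h

lemma reach_mono {S S' : Finset G.E} (hS : S ⊆ S') {x y : G.V} (h : G.reach S x y) :
    G.reach S' x y :=
  Relation.ReflTransGen.mono (r := G.estep S) (p := G.estep S')
    (fun a b (hab : G.estep S a b) => (let ⟨k, hk, hc⟩ := hab; ⟨k, hS hk, hc⟩ : G.estep S' a b)) x y h

lemma connectedOn_mono {S S' : Finset G.E} (hS : S ⊆ S') (h : G.ConnectedOn S) :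
    G.ConnectedOn S' := fun x y => G.reach_mono hS (h x y)

/-- sum exchange identity -/
lemma sum_mul_dStar (f : G.V → ℝ) (α : G.E → ℝ) :
    ∑ x, f x * G.dStar α x = ∑ k, α k * (f (G.head k) - f (G.tail k)) := by
  have key : ∀ t : G.E → G.V,
      ∑ x, ∑ k ∈ Finset.univ.filter (fun k => t k = x), α k * f x
        = ∑ k, α k * f (t k) := by
    intro t
    rw [← Finset.sum_fiberwise Finset.univ t (fun k => α k * f (t k))]
    refine Finset.sum_congr rfl fun x _ => Finset.sum_congr rfl fun k hk => ?_
    rw [(Finset.mem_filter.mp hk).2]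
  calc ∑ x, f x * G.dStar α x
      = (∑ x, ∑ k ∈ Finset.univ.filter (fun k => G.head k = x), α k * f x)
        - ∑ x, ∑ k ∈ Finset.univ.filter (fun k => G.tail k = x), α k * f x := by
        rw [← Finset.sum_sub_distrib]
        refine Finset.sum_congr rfl fun x _ => ?_
        simp only [dStar, mul_sub, Finset.mul_sum]
        congr 1 <;> exact Finset.sum_congr rfl fun k _ => mul_comm _ _
    _ = (∑ k, α k * f (G.head k)) - ∑ k, α k * f (G.tail k) := by rw [key, key]
    _ = ∑ k, α k * (f (G.head k) - f (G.tail k)) := by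
        rw [← Finset.sum_sub_distrib]
        exact Finset.sum_congr rfl fun k _ => by ring

lemma dStar_sub (α β : G.E → ℝ) (x : G.V) :
    G.dStar (fun k => α k - β k) x = G.dStar α x - G.dStar β x := by
  simp only [dStar, Finset.sum_sub_distrib]; ring

lemma dStar_smul (c : ℝ) (α : G.E → ℝ) (x : G.V) :
    G.dStar (fun k => c * α k) x = c * G.dStar α x := by
  simp only [dStar, ← Finset.mul_sum]; ring

lemma dStar_sum {ι : Type*} (s : Finset ι) (F : ι → G.E → ℝ) (x : G.V) :
    G.dStar (fun k => ∑ i ∈ s, F i k) x = ∑ i ∈ s, G.dStar (F i) x := by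
  simp only [dStar, Finset.sum_comm (s := s), Finset.sum_sub_distrib]

lemma IsCycle.sub' {α β : G.E → ℝ} (hα : G.IsCycle α) (hβ : G.IsCycle β) :
    G.IsCycle (fun k => α k - β k) := fun x => by
  rw [G.dStar_sub, hα x, hβ x, sub_zero]

lemma IsCycle.smul' {α : G.E → ℝ} (c : ℝ) (hα : G.IsCycle α) :
    G.IsCycle (fun k => c * α k) := fun x => by
  rw [G.dStar_smul, hα x, mul_zero]

lemma isCycle_sum {ι : Type*} (s : Finset ι) (F : ι → G.E → ℝ)
    (h : ∀ i ∈ s, G.IsCycle (F i)) : G.IsCycle (fun k => ∑ i ∈ s, F i k) := fun x => by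
  rw [G.dStar_sum]
  exact Finset.sum_eq_zero fun i hi => h i hi x

lemma isCycle_zero : G.IsCycle (fun _ => (0 : ℝ)) := fun x => by simp [dStar]

lemma reach_const {S : Finset G.E} {f : G.V → ℝ}
    (h : ∀ k ∈ S, f (G.head k) = f (G.tail k)) {x y : G.V} (hxy : G.reach S x y) :
    f x = f y := by
  induction hxy with
  | refl => rfl
  | tail _ step ih =>
    obtain ⟨k, hk, ⟨h1, h2⟩ | ⟨h1, h2⟩⟩ := step
    · rw [ih, ← h2, ← h1, h k hk]
    · rw [ih, ← h1, ← h2, h k hk]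

/-- `Φ_S : ℝ^V → ℝ^S`, `f ↦ (f(head) - f(tail))|_S`. -/
noncomputable def phiMap (S : Finset G.E) : (G.V → ℝ) →ₗ[ℝ] (S → ℝ) where
  toFun f := fun j => f (G.head j.1) - f (G.tail j.1)
  map_add' f g := by funext j; simp only [Pi.add_apply]; ring
  map_smul' c f := by funext j; simp only [Pi.smul_apply, RingHom.id_apply, smul_eq_mul]; ring

/-- constants -/
noncomputable def constMap : ℝ →ₗ[ℝ] (G.V → ℝ) where
  toFun c := fun _ => c
  map_add' c d := rfl
  map_smul' c d := rfl

lemma finrank_ker_phi_le {S : Finset G.E} (hS : G.ConnectedOn S) [Nonempty G.V] :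
    Module.finrank ℝ (LinearMap.ker (G.phiMap S)) ≤ 1 := by
  have hle : LinearMap.ker (G.phiMap S) ≤ LinearMap.range G.constMap := by
    intro f hf
    rw [LinearMap.mem_ker] at hf
    obtain ⟨x₀⟩ := ‹Nonempty G.V›
    refine ⟨f x₀, funext fun y => ?_⟩
    exact G.reach_const (fun k hk => by
      have := congrFun hf ⟨k, hk⟩
      simpa [phiMap, sub_eq_zero] using this) (hS x₀ y)
  calc Module.finrank ℝ (LinearMap.ker (G.phiMap S))
      ≤ Module.finrank ℝ (LinearMap.range G.constMap) := Submodule.finrank_mono hle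
    _ ≤ Module.finrank ℝ ℝ := LinearMap.finrank_range_le _
    _ = 1 := Module.finrank_self ℝ

lemma card_le_of_connectedOn {S : Finset G.E} (hS : G.ConnectedOn S) [Nonempty G.V] :
    Fintype.card G.V ≤ S.card + 1 := by
  have h1 := LinearMap.finrank_range_add_finrank_ker (G.phiMap S)
  have h2 : Module.finrank ℝ (G.V → ℝ) = Fintype.card G.V := by
    simp [Module.finrank_pi]
  have h3 : Module.finrank ℝ (LinearMap.range (G.phiMap S)) ≤ S.card := by
    calc Module.finrank ℝ (LinearMap.range (G.phiMap S))
        ≤ Module.finrank ℝ (↥S → ℝ) := Submodule.finrank_le _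
      _ = S.card := by simp [Module.finrank_pi]
  have h4 := G.finrank_ker_phi_le hS
  rw [h2] at h1
  omega

/-- A cycle supported on a spanning tree is zero. -/
lemma cycle_tree_zero {T : Finset G.E} (hT : G.IsSpanningTree T)
    {α : G.E → ℝ} (hα : G.IsCycle α) (hsupp : ∀ k, α k ≠ 0 → k ∈ T) :
    ∀ k, α k = 0 := by
  have hV : Nonempty G.V := by
    have := hT.2
    exact Fintype.card_pos_iff.mp (by omega)
  -- range of phiMap T is everything
  have h1 := LinearMap.finrank_range_add_finrank_ker (G.phiMap T)
  have h2 : Module.finrank ℝ (G.V → ℝ) = Fintype.card G.V := by simp [Module.finrank_pi]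
  have h4 := G.finrank_ker_phi_le hT.1
  have h5 : Module.finrank ℝ (↥T → ℝ) = T.card := by simp [Module.finrank_pi]
  have h6 : Module.finrank ℝ (LinearMap.range (G.phiMap T)) ≤ T.card := by
    rw [← h5]; exact Submodule.finrank_le _
  have h7 : Module.finrank ℝ (LinearMap.range (G.phiMap T)) = Module.finrank ℝ (↥T → ℝ) := by
    have := hT.2; rw [h2] at h1; omega
  have hsurj : LinearMap.range (G.phiMap T) = ⊤ := Submodule.eq_top_of_finrank_eq h7
  obtain ⟨f, hf⟩ : ∃ f, G.phiMap T f = fun j => α j.1 := by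
    have := LinearMap.range_eq_top.mp hsurj (fun j => α j.1)
    exact this
  have key : ∑ k, α k * α k = 0 := by
    have h0 : ∑ x, f x * G.dStar α x = 0 :=
      Finset.sum_eq_zero fun x _ => by rw [hα x, mul_zero]
    rw [G.sum_mul_dStar] at h0
    rw [← h0]
    refine Finset.sum_congr rfl fun k _ => ?_
    by_cases hk : α k = 0
    · rw [hk]; ring
    · have hkT := hsupp k hk
      have := congrFun hf ⟨k, hkT⟩
      simp only [phiMap, LinearMap.coe_mk, AddHom.coe_mk] at this
      rw [this]
  intro k
  have h8 : ∀ k ∈ (Finset.univ : Finset G.E), 0 ≤ α k * α k := fun k _ => mul_self_nonneg _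
  have := (Finset.sum_eq_zero_iff_of_nonneg h8).mp key k (Finset.mem_univ k)
  nlinarith [this]

open scoped Classical in
/-- `Ψ_S : ℝ^S → ℝ^V`, extension by zero followed by `d*`. -/
noncomputable def psiMap (S : Finset G.E) : (S → ℝ) →ₗ[ℝ] (G.V → ℝ) where
  toFun a := G.dStar (fun k => if h : k ∈ S then a ⟨k, h⟩ else 0)
  map_add' a b := by
    funext x
    rw [Pi.add_apply]
    rw [show (fun k => if h : k ∈ S then (a + b) ⟨k, h⟩ else 0) =
      (fun k => ((if h : k ∈ S then a ⟨k, h⟩ else 0) + (if h : k ∈ S then b ⟨k, h⟩ else 0)))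
      from funext fun k => by split <;> simp]
    simp only [dStar, Finset.sum_add_distrib]
    ring
  map_smul' c a := by
    funext x
    rw [Pi.smul_apply]
    rw [show (fun k => if h : k ∈ S then (c • a) ⟨k, h⟩ else 0) =
      (fun k => c * (if h : k ∈ S then a ⟨k, h⟩ else 0))
      from funext fun k => by split <;> simp]
    rw [G.dStar_smul]
    simp

lemma sum_dStarR (α : G.E → ℝ) : ∑ x, G.dStar α x = 0 := by
  simp only [dStar, Finset.sum_sub_distrib]
  rw [Finset.sum_fiberwise, Finset.sum_fiberwise]
  simp

open scoped Classical in
lemma exists_cycle_of_card {S : Finset G.E} [Nonempty G.V]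
    (hcard : Fintype.card G.V ≤ S.card) :
    ∃ α : G.E → ℝ, G.IsCycle α ∧ (∃ j, α j ≠ 0) ∧ ∀ k, α k ≠ 0 → k ∈ S := by
  -- the sum functional
  let sumMap : (G.V → ℝ) →ₗ[ℝ] ℝ :=
    { toFun := fun g => ∑ x, g x
      map_add' := fun a b => by simp [Finset.sum_add_distrib]
      map_smul' := fun c a => by simp [Finset.mul_sum] }
  have hrange : LinearMap.range (G.psiMap S) ≤ LinearMap.ker sumMap := by
    rintro _ ⟨a, rfl⟩
    exact G.sum_dStarR _
  have hkerne : LinearMap.ker sumMap ≠ ⊤ := by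
    intro h
    have h1 : (fun _ => (1 : ℝ)) ∈ LinearMap.ker sumMap := h ▸ Submodule.mem_top
    simp only [LinearMap.mem_ker, LinearMap.coe_mk, AddHom.coe_mk, sumMap] at h1
    rw [Finset.sum_const, nsmul_eq_mul, mul_one] at h1
    have h2 : Finset.univ.card = 0 := Nat.cast_eq_zero.mp h1
    rw [Finset.card_univ] at h2
    have := Fintype.card_pos (α := G.V)
    omega
  have hlt : Module.finrank ℝ (LinearMap.ker sumMap) < Fintype.card G.V := by
    have := Submodule.finrank_lt (K := ℝ) (V := G.V → ℝ) hkerne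
    simpa [Module.finrank_pi] using this
  have hr : Module.finrank ℝ (LinearMap.range (G.psiMap S)) < Fintype.card G.V :=
    lt_of_le_of_lt (Submodule.finrank_mono hrange) hlt
  have h1 := LinearMap.finrank_range_add_finrank_ker (G.psiMap S)
  have h2 : Module.finrank ℝ (↥S → ℝ) = S.card := by simp [Module.finrank_pi]
  rw [h2] at h1
  have hker : 0 < Module.finrank ℝ (LinearMap.ker (G.psiMap S)) := by omega
  obtain ⟨a, ha, hane⟩ := Submodule.exists_mem_ne_zero_of_ne_bot
    (p := LinearMap.ker (G.psiMap S)) (by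
      intro h
      rw [h] at hker
      simp at hker)
  refine ⟨fun k => if h : k ∈ S then a ⟨k, h⟩ else 0, ?_, ?_, ?_⟩
  · intro x
    have := congrFun (LinearMap.mem_ker.mp ha) x
    exact this
  · obtain ⟨j, hj⟩ := Function.ne_iff.mp hane
    exact ⟨j.1, by simpa [j.2] using hj⟩
  · intro k hk
    by_contra h
    simp [h] at hk

open scoped Classical in
/-- cut lemma: a cycle through `j` forces a connection avoiding `j`. -/
lemma cut_reach {S : Finset G.E} {α : G.E → ℝ} (hα : G.IsCycle α) {j : G.E}
    (hj : α j ≠ 0) (hsupp : ∀ k, α k ≠ 0 → k ∈ S) :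
    G.reach (S.erase j) (G.head j) (G.tail j) := by
  by_contra hc
  set A : Finset G.V := Finset.univ.filter (fun x => G.reach (S.erase j) (G.head j) x) with hA
  have hhead : G.head j ∈ A := by
    simp only [hA, Finset.mem_filter, Finset.mem_univ, true_and]
    exact Relation.ReflTransGen.refl
  have htail : G.tail j ∉ A := by
    simp only [hA, Finset.mem_filter, Finset.mem_univ, true_and]
    exact hc
  have hz : ∑ x ∈ A, G.dStar α x = 0 := Finset.sum_eq_zero fun x _ => hα x
  have hexp : ∑ x ∈ A, G.dStar α x =
      ∑ k, ((if G.head k ∈ A then α k else 0) - (if G.tail k ∈ A then α k else 0)) := by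
    simp only [dStar, Finset.sum_sub_distrib]
    rw [Finset.sum_fiberwise_eq_sum_filter, Finset.sum_fiberwise_eq_sum_filter]
    rw [Finset.sum_filter, Finset.sum_filter]
  rw [hexp] at hz
  have hsingle : ∀ k, k ≠ j →
      ((if G.head k ∈ A then α k else 0) - (if G.tail k ∈ A then α k else 0)) = 0 := by
    intro k hkj
    by_cases hαk : α k = 0
    · simp [hαk]
    · have hkS : k ∈ S.erase j := Finset.mem_erase.mpr ⟨hkj, hsupp k hαk⟩
      have hiff : (G.head k ∈ A) ↔ (G.tail k ∈ A) := by
        simp only [hA, Finset.mem_filter, Finset.mem_univ, true_and]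
        constructor
        · intro h
          exact h.trans (Relation.ReflTransGen.single
            (G.estep_symm ⟨k, hkS, Or.inl ⟨rfl, rfl⟩⟩))
        · intro h
          exact h.trans (Relation.ReflTransGen.single ⟨k, hkS, Or.inl ⟨rfl, rfl⟩⟩)
      by_cases hh : G.head k ∈ A
      · rw [if_pos hh, if_pos (hiff.mp hh), sub_self]
      · rw [if_neg hh, if_neg (fun ht => hh (hiff.mpr ht)), sub_self]
  rw [Finset.sum_eq_single j (fun k _ hkj => hsingle k hkj) (fun h => absurd (Finset.mem_univ j) h)]
    at hz
  rw [if_pos hhead, if_neg htail, sub_zero] at hz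
  exact hj hz

lemma connectedOn_erase {S : Finset G.E} {j : G.E} (hS : G.ConnectedOn S)
    (hj : G.reach (S.erase j) (G.head j) (G.tail j)) :
    G.ConnectedOn (S.erase j) := by
  intro x y
  have h := hS x y
  rw [connectedOn_iff] at *
  change G.reach S x y at h
  induction h with
  | refl => exact Relation.ReflTransGen.refl
  | tail _ step ih =>
    obtain ⟨k, hk, ⟨h1, h2⟩ | ⟨h1, h2⟩⟩ := step
    · by_cases hkj : k = j
      · subst hkj
        exact ih.trans (h1 ▸ h2 ▸ (G.reach_symm hj).trans Relation.ReflTransGen.refl)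
      · exact ih.tail ⟨k, Finset.mem_erase.mpr ⟨hkj, hk⟩, Or.inl ⟨h1, h2⟩⟩
    · by_cases hkj : k = j
      · subst hkj
        exact ih.trans (h1 ▸ h2 ▸ hj)
      · exact ih.tail ⟨k, Finset.mem_erase.mpr ⟨hkj, hk⟩, Or.inr ⟨h1, h2⟩⟩

lemma dStar_indicator (k : G.E) (v : G.V) :
    G.dStar (fun m => if m = k then (1 : ℝ) else 0) v =
      (if G.head k = v then (1 : ℝ) else 0) - (if G.tail k = v then 1 else 0) := by
  simp only [dStar]
  rw [Finset.sum_ite_eq' (Finset.univ.filter fun m => G.head m = v) k (fun _ => (1:ℝ)),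
    Finset.sum_ite_eq' (Finset.univ.filter fun m => G.tail m = v) k (fun _ => (1:ℝ))]
  simp [Finset.mem_filter]

lemma dStar_add (α β : G.E → ℝ) (x : G.V) :
    G.dStar (fun k => α k + β k) x = G.dStar α x + G.dStar β x := by
  simp only [dStar, Finset.sum_add_distrib]; ring

/-- a walk yields an integral chain with prescribed boundary -/
lemma exists_chain_of_reach {S : Finset G.E} {x y : G.V} (h : G.reach S x y) :
    ∃ θ : G.E → ℝ, (∀ k, θ k ≠ 0 → k ∈ S) ∧ (∀ k, ∃ n : ℤ, θ k = n) ∧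
      ∀ v, G.dStar θ v = (if v = y then 1 else 0) - (if v = x then 1 else 0) := by
  induction h with
  | refl =>
    refine ⟨fun _ => 0, by simp, fun k => ⟨0, by simp⟩, fun v => ?_⟩
    simp [dStar]
  | @tail b c _ step ih =>
    obtain ⟨θ, hsupp, hint, hb⟩ := ih
    obtain ⟨k, hkS, ⟨h1, h2⟩ | ⟨h1, h2⟩⟩ := step
    · refine ⟨fun m => θ m + (if m = k then 1 else 0), ?_, ?_, ?_⟩
      · intro m hm
        by_cases hmk : m = k
        · exact hmk ▸ hkS
        · exact hsupp m (by simpa [hmk] using hm)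
      · intro m
        obtain ⟨n, hn⟩ := hint m
        exact ⟨n + (if m = k then 1 else 0), by push_cast [apply_ite]; rw [hn]; split <;> simp⟩
      · intro v
        rw [G.dStar_add, hb v, G.dStar_indicator, h1, h2]
        by_cases hvb : v = b <;> by_cases hvc : v = c <;> by_cases hvx : v = x <;>
          simp [hvb, hvc, hvx, eq_comm] <;> ring_nf <;> simp_all [eq_comm] <;> ring
    · refine ⟨fun m => θ m - (if m = k then 1 else 0), ?_, ?_, ?_⟩
      · intro m hm
        by_cases hmk : m = k
        · exact hmk ▸ hkS
        · exact hsupp m (by simpa [hmk] using hm)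
      · intro m
        obtain ⟨n, hn⟩ := hint m
        exact ⟨n - (if m = k then 1 else 0), by push_cast [apply_ite]; rw [hn]; split <;> simp⟩
      · intro v
        have : G.dStar (fun m => θ m - (if m = k then 1 else 0)) v
            = G.dStar θ v - G.dStar (fun m => if m = k then (1:ℝ) else 0) v := G.dStar_sub _ _ v
        rw [this, hb v, G.dStar_indicator, h1, h2]
        by_cases hvb : v = b <;> by_cases hvc : v = c <;> by_cases hvx : v = x <;>
          simp [hvb, hvc, hvx, eq_comm] <;> ring_nf <;> simp_all [eq_comm] <;> ring

/-- spec predicate for the fundamental cycle -/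
def fcP (T : Finset G.E) (e : G.E) : Prop :=
  ∃ c : G.E → ℝ, G.IsCycle c ∧ c e = 1 ∧ (∀ k, c k ≠ 0 → k ∈ insert e T) ∧
    ∀ k, ∃ n : ℤ, c k = n

open scoped Classical in
noncomputable def fc (T : Finset G.E) (e : G.E) : G.E → ℝ :=
  if h : G.fcP T e then h.choose else fun _ => 0

lemma fc_cycle (T : Finset G.E) (e : G.E) : G.IsCycle (G.fc T e) := by
  rw [fc]
  split
  · exact (Exists.choose_spec ‹G.fcP T e›).1
  · exact G.isCycle_zero

lemma fc_supp (T : Finset G.E) (e : G.E) : ∀ k, G.fc T e k ≠ 0 → k ∈ insert e T := by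
  rw [fc]
  split
  · exact (Exists.choose_spec ‹G.fcP T e›).2.2.1
  · simp

lemma fc_int (T : Finset G.E) (e : G.E) : ∀ k, ∃ n : ℤ, G.fc T e k = n := by
  rw [fc]
  split
  · exact (Exists.choose_spec ‹G.fcP T e›).2.2.2
  · exact fun k => ⟨0, by simp⟩

lemma fcP_of_tree {T : Finset G.E} {e : G.E} (hT : G.IsSpanningTree T) (he : e ∉ T) :
    G.fcP T e := by
  obtain ⟨θ, hsupp, hint, hb⟩ := G.exists_chain_of_reach (hT.1 (G.head e) (G.tail e))
  refine ⟨fun m => (if m = e then 1 else 0) + θ m, ?_, ?_, ?_, ?_⟩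
  · intro v
    rw [G.dStar_add, G.dStar_indicator, hb v]
    by_cases hh : G.head e = v <;> by_cases ht : G.tail e = v <;>
      simp [hh, ht, eq_comm] <;> simp_all [eq_comm]
  · have hθe : θ e = 0 := by
      by_contra h
      exact he (hsupp e h)
    simp [hθe]
  · intro k hk
    by_cases hke : k = e
    · exact hke ▸ Finset.mem_insert_self e T
    · refine Finset.mem_insert_of_mem (hsupp k ?_)
      simpa [hke] using hk
  · intro k
    obtain ⟨n, hn⟩ := hint k
    refine ⟨(if k = e then 1 else 0) + n, by dsimp only; rw [hn]; split <;> push_cast <;> ring⟩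

lemma fc_self {T : Finset G.E} {e : G.E} (hT : G.IsSpanningTree T) (he : e ∉ T) :
    G.fc T e e = 1 := by
  rw [fc, dif_pos (G.fcP_of_tree hT he)]
  exact (Exists.choose_spec (G.fcP_of_tree hT he)).2.1

/-- uniqueness of the fundamental cycle -/
lemma fc_unique {T : Finset G.E} {e : G.E} (hT : G.IsSpanningTree T) (he : e ∉ T)
    {c : G.E → ℝ} (hc : G.IsCycle c) (hce : c e = 1)
    (hsupp : ∀ k, c k ≠ 0 → k ∈ insert e T) : ∀ k, c k = G.fc T e k := by
  have hρ : ∀ k, (fun k => c k - G.fc T e k) k = 0 := by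
    refine G.cycle_tree_zero hT (hc.sub' G (G.fc_cycle T e)) ?_
    intro k hk
    by_cases hke : k = e
    · subst hke
      rw [hce, G.fc_self hT he, sub_self] at hk
      exact absurd rfl hk
    · have : c k ≠ 0 ∨ G.fc T e k ≠ 0 := by
        by_contra h
        push_neg at h
        simp [h.1, h.2] at hk
      rcases this with h | h
      · exact (Finset.mem_insert.mp (hsupp k h)).resolve_left hke
      · exact (Finset.mem_insert.mp (G.fc_supp T e k h)).resolve_left hke
  intro k
  have := hρ k
  simpa [sub_eq_zero] using this

open scoped Classical in
/-- fundamental cycle decomposition of an arbitrary cycle -/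
lemma cycle_decomp {T : Finset G.E} (hT : G.IsSpanningTree T) {γ : G.E → ℝ}
    (hγ : G.IsCycle γ) : ∀ k, γ k = ∑ j ∈ Finset.univ \ T, γ j * G.fc T j k := by
  have hcyc : G.IsCycle (fun k => ∑ j ∈ Finset.univ \ T, γ j * G.fc T j k) :=
    G.isCycle_sum _ _ (fun j _ => (G.fc_cycle T j).smul' G _)
  have hρ := G.cycle_tree_zero hT (hγ.sub' G hcyc) (fun k hk => ?_)
  · intro k
    have := hρ k
    simpa [sub_eq_zero] using this
  · by_contra hkT
    apply hk
    have hsum : ∑ j ∈ Finset.univ \ T, γ j * G.fc T j k = γ k := by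
      rw [Finset.sum_eq_single_of_mem k (by simp [hkT])]
      · rw [G.fc_self hT hkT, mul_one]
      · intro j hjmem hjk
        have hjT : j ∉ T := (Finset.mem_sdiff.mp hjmem).2
        have : G.fc T j k = 0 := by
          by_contra h
          rcases Finset.mem_insert.mp (G.fc_supp T j k h) with h' | h'
          · exact hjk h'.symm
          · exact hkT h'
        rw [this, mul_zero]
    simp only [hsum, sub_self]

lemma tree_exchange {T : Finset G.E} {e j : G.E} (hT : G.IsSpanningTree T) (he : e ∉ T)
    (hj : j ∈ T) (hfc : G.fc T e j ≠ 0) : G.IsSpanningTree (insert e (T.erase j)) := by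
  have hje : j ≠ e := fun h => he (h ▸ hj)
  have hC : G.ConnectedOn (insert e T) := G.connectedOn_mono (Finset.subset_insert e T) hT.1
  have hr := G.cut_reach (G.fc_cycle T e) hfc (G.fc_supp T e)
  rw [← Finset.erase_insert_of_ne hje.symm] at *
  have hC' := G.connectedOn_erase hC hr
  refine ⟨hC', ?_⟩
  have h1 : e ∉ T.erase j := fun h => he (Finset.mem_of_mem_erase h)
  rw [Finset.erase_insert_of_ne hje.symm, Finset.card_insert_of_notMem h1,
    Finset.card_erase_of_mem hj]
  have h2 : 1 ≤ T.card := Finset.card_pos.mpr ⟨j, hj⟩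
  have := hT.2
  omega

lemma fc_swap {T T' : Finset G.E} {e j : G.E} (hT : G.IsSpanningTree T)
    (hT' : G.IsSpanningTree T') (he : e ∉ T) (hj : j ∉ T')
    (hTT' : insert e T = insert j T') : G.fc T e j * G.fc T' j e = 1 := by
  have hcyc : G.IsCycle (fun k => G.fc T e k - G.fc T e j * G.fc T' j k) :=
    (G.fc_cycle T e).sub' G ((G.fc_cycle T' j).smul' G _)
  have hρ := G.cycle_tree_zero hT' hcyc (fun k hk => ?_)
  · have h1 := hρ e
    rw [G.fc_self hT he] at h1
    linarith [h1]
  · have hkj : k ≠ j := by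
      intro h
      subst h
      rw [G.fc_self hT' hj, mul_one, sub_self] at hk
      exact hk rfl
    have : G.fc T e k ≠ 0 ∨ G.fc T' j k ≠ 0 := by
      by_contra h
      push_neg at h
      simp [h.1, h.2] at hk
    have hkin : k ∈ insert j T' := by
      rcases this with h | h
      · exact hTT' ▸ G.fc_supp T e k h
      · exact G.fc_supp T' j k h
    exact (Finset.mem_insert.mp hkin).resolve_left hkj

lemma fc_swap_eq {T T' : Finset G.E} {e j : G.E} (hT : G.IsSpanningTree T)
    (hT' : G.IsSpanningTree T') (he : e ∉ T) (hj : j ∉ T')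
    (hTT' : insert e T = insert j T') : G.fc T e j = G.fc T' j e := by
  obtain ⟨m, hm⟩ := G.fc_int T e j
  obtain ⟨n, hn⟩ := G.fc_int T' j e
  have h := G.fc_swap hT hT' he hj hTT'
  rw [hm, hn] at h ⊢
  have h' : m * n = 1 := by exact_mod_cast h
  rcases (Int.mul_eq_one_iff_eq_one_or_neg_one.mp h') with ⟨h1, h2⟩ | ⟨h1, h2⟩ <;>
    rw [h1, h2]

lemma fc_bound {T : Finset G.E} {e : G.E} (hT : G.IsSpanningTree T) (he : e ∉ T) :
    ∀ j, |G.fc T e j| ≤ 1 := by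
  intro j
  by_cases hje : j = e
  · rw [hje, G.fc_self hT he]; norm_num
  by_cases hjT : j ∈ T
  · by_cases hfc : G.fc T e j = 0
    · rw [hfc]; norm_num
    · have hT' := G.tree_exchange hT he hjT hfc
      have hje' : j ∉ insert e (T.erase j) := by
        simp [hje, Finset.mem_erase]
      have hTT' : insert e T = insert j (insert e (T.erase j)) := by
        rw [Finset.insert_comm, Finset.insert_erase hjT]
      have h := G.fc_swap hT hT' he hje' hTT'
      obtain ⟨m, hm⟩ := G.fc_int T e j
      obtain ⟨n, hn⟩ := G.fc_int (insert e (T.erase j)) j e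
      rw [hm, hn] at h
      have h' : m * n = 1 := by exact_mod_cast h
      rcases (Int.mul_eq_one_iff_eq_one_or_neg_one.mp h') with ⟨h1, _⟩ | ⟨h1, _⟩ <;>
        rw [hm, h1] <;> norm_num
  · have : G.fc T e j = 0 := by
      by_contra h
      rcases Finset.mem_insert.mp (G.fc_supp T e j h) with h' | h'
      · exact hje h'
      · exact hjT h'
    rw [this]; norm_num

open scoped Classical in
lemma exists_spanningTree [Nonempty G.V] (hG : G.Connected) :
    ∃ T, G.IsSpanningTree T := by
  have hconn : G.ConnectedOn Finset.univ := by
    intro x y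
    refine Relation.ReflTransGen.mono (r := G.Adj) ?_ x y (hG x y)
    rintro a b ⟨k, hc⟩
    exact ⟨k, Finset.mem_univ k, hc⟩
  obtain ⟨S, hSmem, hSmin⟩ := Finset.exists_min_image
    (Finset.univ.filter fun S : Finset G.E => G.ConnectedOn S) Finset.card
    ⟨Finset.univ, by simp [hconn]⟩
  have hS : G.ConnectedOn S := (Finset.mem_filter.mp hSmem).2
  have hub := G.card_le_of_connectedOn hS
  have hlb : S.card + 1 ≤ Fintype.card G.V := by
    by_contra h
    push_neg at h
    have hcard : Fintype.card G.V ≤ S.card := by omega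
    obtain ⟨α, hα, ⟨j, hj⟩, hsupp⟩ := G.exists_cycle_of_card hcard
    have hjS : j ∈ S := hsupp j hj
    have hr := G.cut_reach hα hj hsupp
    have hC' := G.connectedOn_erase hS hr
    have := hSmin (S.erase j) (Finset.mem_filter.mpr ⟨Finset.mem_univ _, hC'⟩)
    rw [Finset.card_erase_of_mem hjS] at this
    have h1 : 1 ≤ S.card := Finset.card_pos.mpr ⟨j, hjS⟩
    omega
  exact ⟨S, hS, by omega⟩

open scoped Classical in
lemma wG_pos [Nonempty G.V] (hG : G.Connected) : 0 < G.wG := by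
  obtain ⟨T, hT⟩ := G.exists_spanningTree hG
  rw [wG]
  refine Finset.sum_pos' (fun S _ => ?_) ⟨T, Finset.mem_univ T, ?_⟩
  · split
    · exact Finset.prod_nonneg fun k _ => (G.len_pos k).le
    · exact le_refl 0
  · rw [if_pos hT]
    exact Finset.prod_pos fun k _ => G.len_pos k

lemma wt_nonneg (T : Finset G.E) : 0 ≤ G.wt T :=
  Finset.prod_nonneg fun k _ => (G.len_pos k).le

lemma wt_exchange {T : Finset G.E} {e j : G.E} (he : e ∉ T) (hj : j ∈ T) :
    G.wt T * G.len j = G.wt (insert e (T.erase j)) * G.len e := by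
  have hje : j ≠ e := fun h => he (h ▸ hj)
  have hset : Finset.univ \ insert e (T.erase j) = (insert j (Finset.univ \ T)).erase e := by
    ext k
    simp only [Finset.mem_sdiff, Finset.mem_insert, Finset.mem_erase, Finset.mem_univ, true_and]
    tauto
  have hjnot : j ∉ Finset.univ \ T := by simp [hj]
  have hein : e ∈ insert j (Finset.univ \ T) := Finset.mem_insert_of_mem (by simp [he])
  rw [wt, wt, hset]
  rw [Finset.prod_erase_mul _ _ hein, Finset.prod_insert hjnot]
  ring

end WGraph

open scoped Classical in
/-- Let `β = π(δ_e)` be the orthogonal projection of the basis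
1-chain of the edge `e` to the cycle space. The Foster coefficient
`F(e) = ‖π(e)‖_sup` is attained at the diagonal coefficient `β e`, and equals the
weighted fraction of spanning trees not containing `e`:
`F(e) = β e = (1/w(G)) Σ_{T : e ∉ T} w(T)`. -/
theorem foster_coefficient_diagonal (G : WGraph) (hG : G.Connected) (e : G.E)
    (β : G.E → ℝ) (hcyc : G.IsCycle β)
    (horth : ∀ γ : G.E → ℝ, G.IsCycle γ →
      G.ip (fun j => (if j = e then (1 : ℝ) else 0) - β j) γ = 0) :
    IsGreatest (Set.range fun j => |β j|) (β e) ∧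
    β e = (1 / G.wG) *
      ∑ T : Finset G.E, if G.IsSpanningTree T ∧ e ∉ T then G.wt T else 0 := by
  classical
  have hV : Nonempty G.V := ⟨G.tail e⟩
  have hwG : 0 < G.wG := G.wG_pos hG
  set μ : G.E → ℝ := fun k =>
    (1 / G.wG) * ∑ T : Finset G.E,
      (if G.IsSpanningTree T ∧ e ∉ T then G.wt T * G.fc T e k else 0) with hμdef
  -- μ is a cycle
  have hμcyc : G.IsCycle μ := by
    refine WGraph.IsCycle.smul' G (1 / G.wG) (G.isCycle_sum Finset.univ _ fun T _ => ?_)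
    by_cases h : G.IsSpanningTree T ∧ e ∉ T
    · have : (fun k => if G.IsSpanningTree T ∧ e ∉ T then G.wt T * G.fc T e k else 0)
          = fun k => G.wt T * G.fc T e k := funext fun k => if_pos h
      rw [this]
      exact (G.fc_cycle T e).smul' G _
    · have : (fun k => if G.IsSpanningTree T ∧ e ∉ T then G.wt T * G.fc T e k else 0)
          = fun _ => (0 : ℝ) := funext fun k => if_neg h
      rw [this]
      exact G.isCycle_zero
  -- main orthogonality computation
  have hmain : ∀ γ : G.E → ℝ, G.IsCycle γ →
      ∑ k, μ k * γ k * G.len k = γ e * G.len e := by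
    intro γ hγ
    have h1 : ∑ k, μ k * γ k * G.len k
        = (1 / G.wG) * ∑ T : Finset G.E,
            (if G.IsSpanningTree T ∧ e ∉ T
              then G.wt T * ∑ k, G.fc T e k * (γ k * G.len k) else 0) := by
      calc ∑ k, μ k * γ k * G.len k
          = (1 / G.wG) * ∑ k, ∑ T : Finset G.E,
              (if G.IsSpanningTree T ∧ e ∉ T then G.wt T * G.fc T e k else 0)
                * (γ k * G.len k) := by
            rw [Finset.mul_sum]
            refine Finset.sum_congr rfl fun k _ => ?_
            rw [← Finset.sum_mul, hμdef]
            ring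
        _ = (1 / G.wG) * ∑ T : Finset G.E, ∑ k,
              (if G.IsSpanningTree T ∧ e ∉ T then G.wt T * G.fc T e k else 0)
                * (γ k * G.len k) := by rw [Finset.sum_comm]
        _ = _ := by
            congr 1
            refine Finset.sum_congr rfl fun T _ => ?_
            split
            · rw [Finset.mul_sum]
              exact Finset.sum_congr rfl fun k _ => by ring
            · simp
    have h2 : ∀ T : Finset G.E, G.IsSpanningTree T → e ∉ T →
        ∑ k, G.fc T e k * (γ k * G.len k)
          = γ e * G.len e + ∑ j ∈ T, G.fc T e j * (γ j * G.len j) := by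
      intro T hT he'
      have hss : ∑ k ∈ insert e T, G.fc T e k * (γ k * G.len k)
          = ∑ k, G.fc T e k * (γ k * G.len k) := by
        refine Finset.sum_subset (Finset.subset_univ _) fun k _ hk => ?_
        have : G.fc T e k = 0 := by
          by_contra h
          exact hk (G.fc_supp T e k h)
        rw [this, zero_mul]
      rw [← hss, Finset.sum_insert he', G.fc_self hT he', one_mul]
    -- the exchange identity
    have hstar : ∑ T : Finset G.E, (if G.IsSpanningTree T ∧ e ∉ T
          then G.wt T * ∑ j ∈ T, G.fc T e j * (γ j * G.len j) else 0)
        = ∑ T : Finset G.E, (if G.IsSpanningTree T ∧ e ∈ T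
          then G.wt T * (γ e * G.len e) else 0) := by
      -- convert to pair sums
      have lhs_eq : ∑ T : Finset G.E, (if G.IsSpanningTree T ∧ e ∉ T
            then G.wt T * ∑ j ∈ T, G.fc T e j * (γ j * G.len j) else 0)
          = ∑ p ∈ (Finset.univ ×ˢ Finset.univ : Finset (Finset G.E × G.E)),
              (if G.IsSpanningTree p.1 ∧ e ∉ p.1 ∧ p.2 ∈ p.1 ∧ G.fc p.1 e p.2 ≠ 0
                then G.wt p.1 * (G.fc p.1 e p.2 * (γ p.2 * G.len p.2)) else 0) := by
        rw [Finset.sum_product]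
        refine Finset.sum_congr rfl fun T _ => ?_
        by_cases h : G.IsSpanningTree T ∧ e ∉ T
        · rw [if_pos h, Finset.mul_sum]
          rw [show ∑ j ∈ T, G.wt T * (G.fc T e j * (γ j * G.len j))
              = ∑ j, (if j ∈ T then G.wt T * (G.fc T e j * (γ j * G.len j)) else 0) by
            rw [Finset.sum_ite_mem, Finset.univ_inter]]
          refine Finset.sum_congr rfl fun j _ => ?_
          by_cases hj : j ∈ T
          · by_cases hfc : G.fc T e j = 0
            · simp [hj, h, hfc]
            · rw [if_pos hj, if_pos ⟨h.1, h.2, hj, hfc⟩]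
          · simp [hj, h]
        · rw [if_neg h]
          refine (Finset.sum_eq_zero fun j _ => ?_).symm
          rw [if_neg]
          tauto
      have rhs_eq : ∑ T : Finset G.E, (if G.IsSpanningTree T ∧ e ∈ T
            then G.wt T * (γ e * G.len e) else 0)
          = ∑ p ∈ (Finset.univ ×ˢ Finset.univ : Finset (Finset G.E × G.E)),
              (if G.IsSpanningTree p.1 ∧ e ∈ p.1 ∧ p.2 ∉ p.1 ∧ G.fc p.1 p.2 e ≠ 0
                then G.wt p.1 * (γ p.2 * G.fc p.1 p.2 e * G.len e) else 0) := by
        rw [Finset.sum_product]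
        refine Finset.sum_congr rfl fun T _ => ?_
        by_cases h : G.IsSpanningTree T ∧ e ∈ T
        · rw [if_pos h]
          have hdecomp := G.cycle_decomp h.1 hγ e
          rw [hdecomp, Finset.sum_mul, Finset.mul_sum]
          rw [show ∑ j ∈ Finset.univ \ T, G.wt T * (γ j * G.fc T j e * G.len e)
              = ∑ j, (if j ∈ Finset.univ \ T
                  then G.wt T * (γ j * G.fc T j e * G.len e) else 0) by
            rw [Finset.sum_ite_mem, Finset.univ_inter]]
          refine Finset.sum_congr rfl fun j _ => ?_
          by_cases hj : j ∈ T
          · have h1 : j ∉ Finset.univ \ T := by simp [hj]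
            rw [if_neg h1, if_neg (by tauto :
              ¬(G.IsSpanningTree T ∧ e ∈ T ∧ j ∉ T ∧ G.fc T j e ≠ 0))]
          · have hmem : j ∈ Finset.univ \ T := by simp [hj]
            by_cases hfc : G.fc T j e = 0
            · simp [hmem, hfc]
            · rw [if_pos hmem, if_pos ⟨h.1, h.2, hj, hfc⟩]
        · rw [if_neg h]
          refine (Finset.sum_eq_zero fun j _ => ?_).symm
          rw [if_neg]
          tauto
      rw [lhs_eq, rhs_eq, ← Finset.sum_filter, ← Finset.sum_filter]
      refine Finset.sum_nbij' (fun p => (insert e (p.1.erase p.2), p.2))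
        (fun p => (insert p.2 (p.1.erase e), p.2)) ?_ ?_ ?_ ?_ ?_
      · rintro ⟨T, j⟩ hp
        rw [Finset.mem_filter] at hp
        obtain ⟨-, hT, he', hjT, hfc⟩ := hp
        have hje : j ≠ e := fun h => he' (h ▸ hjT)
        have hT' := G.tree_exchange hT he' hjT hfc
        have hj' : j ∉ insert e (T.erase j) := by simp [hje]
        have hTT' : insert e T = insert j (insert e (T.erase j)) := by
          rw [Finset.insert_comm, Finset.insert_erase hjT]
        have hswap := G.fc_swap hT hT' he' hj' hTT'
        rw [Finset.mem_filter]
        refine ⟨by simp, hT', Finset.mem_insert_self e _, hj', fun h0 => ?_⟩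
        rw [h0, mul_zero] at hswap
        norm_num at hswap
      · rintro ⟨T', j⟩ hp
        rw [Finset.mem_filter] at hp
        obtain ⟨-, hT', he', hjT', hfc'⟩ := hp
        have hje : e ≠ j := fun h => hjT' (h ▸ he')
        have hT := G.tree_exchange hT' hjT' he' hfc'
        have he'' : e ∉ insert j (T'.erase e) := by simp [hje]
        have hjin : j ∈ insert j (T'.erase e) := Finset.mem_insert_self _ _
        have hTT' : insert e (insert j (T'.erase e)) = insert j T' := by
          rw [Finset.insert_comm, Finset.insert_erase he']
        have hswap := G.fc_swap hT hT' he'' hjT' hTT'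
        rw [Finset.mem_filter]
        refine ⟨by simp, hT, he'', hjin, fun h0 => ?_⟩
        rw [h0, zero_mul] at hswap
        norm_num at hswap
      · rintro ⟨T, j⟩ hp
        rw [Finset.mem_filter] at hp
        obtain ⟨-, hT, he', hjT, hfc⟩ := hp
        have h1 : e ∉ T.erase j := fun h => he' (Finset.mem_of_mem_erase h)
        simp only [Prod.mk.injEq]
        exact ⟨by rw [Finset.erase_insert h1, Finset.insert_erase hjT], trivial⟩
      · rintro ⟨T', j⟩ hp
        rw [Finset.mem_filter] at hp
        obtain ⟨-, hT', he', hjT', hfc'⟩ := hp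
        have h1 : j ∉ T'.erase e := fun h => hjT' (Finset.mem_of_mem_erase h)
        simp only [Prod.mk.injEq]
        exact ⟨by rw [Finset.erase_insert h1, Finset.insert_erase he'], trivial⟩
      · rintro ⟨T, j⟩ hp
        rw [Finset.mem_filter] at hp
        obtain ⟨-, hT, he', hjT, hfc⟩ := hp
        have hje : j ≠ e := fun h => he' (h ▸ hjT)
        have hT'tree := G.tree_exchange hT he' hjT hfc
        have hj' : j ∉ insert e (T.erase j) := by simp [hje]
        have hTT' : insert e T = insert j (insert e (T.erase j)) := by
          rw [Finset.insert_comm, Finset.insert_erase hjT]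
        have heq := G.fc_swap_eq hT hT'tree he' hj' hTT'
        have hwt := G.wt_exchange he' hjT
        dsimp only
        rw [← heq]
        linear_combination (G.fc T e j * γ j) * hwt
    -- assemble hmain
    rw [h1]
    have hexp : ∀ T : Finset G.E, (if G.IsSpanningTree T ∧ e ∉ T
          then G.wt T * ∑ k, G.fc T e k * (γ k * G.len k) else 0)
        = (if G.IsSpanningTree T ∧ e ∉ T then G.wt T * (γ e * G.len e) else 0)
          + (if G.IsSpanningTree T ∧ e ∉ T
              then G.wt T * ∑ j ∈ T, G.fc T e j * (γ j * G.len j) else 0) := by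
      intro T
      by_cases h : G.IsSpanningTree T ∧ e ∉ T
      · rw [if_pos h, if_pos h, if_pos h, h2 T h.1 h.2]
        ring
      · rw [if_neg h, if_neg h, if_neg h, add_zero]
    calc (1 / G.wG) * ∑ T : Finset G.E, (if G.IsSpanningTree T ∧ e ∉ T
            then G.wt T * ∑ k, G.fc T e k * (γ k * G.len k) else 0)
        = (1 / G.wG) *
            ((∑ T : Finset G.E, (if G.IsSpanningTree T ∧ e ∉ T
              then G.wt T * (γ e * G.len e) else 0))
            + ∑ T : Finset G.E, (if G.IsSpanningTree T ∧ e ∉ T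
              then G.wt T * ∑ j ∈ T, G.fc T e j * (γ j * G.len j) else 0)) := by
          rw [← Finset.sum_add_distrib]
          congr 1
          exact Finset.sum_congr rfl fun T _ => hexp T
      _ = (1 / G.wG) *
            ((∑ T : Finset G.E, (if G.IsSpanningTree T ∧ e ∉ T
              then G.wt T * (γ e * G.len e) else 0))
            + ∑ T : Finset G.E, (if G.IsSpanningTree T ∧ e ∈ T
              then G.wt T * (γ e * G.len e) else 0)) := by rw [hstar]
      _ = (1 / G.wG) * (G.wG * (γ e * G.len e)) := by
          congr 1
          rw [← Finset.sum_add_distrib, WGraph.wG, Finset.sum_mul]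
          refine Finset.sum_congr rfl fun T _ => ?_
          by_cases hst : G.IsSpanningTree T
          · by_cases hem : e ∈ T
            · simp [hst, hem]
            · simp [hst, hem]
          · simp [hst]
      _ = γ e * G.len e := by
          field_simp
  -- β equals μ
  have hβμ : ∀ k, β k = μ k := by
    have hμorth : ∀ γ : G.E → ℝ, G.IsCycle γ →
        ∑ k, ((if k = e then (1 : ℝ) else 0) - μ k) * γ k * G.len k = 0 := by
      intro γ hγ
      have hδ : ∑ k, (if k = e then (1 : ℝ) else 0) * γ k * G.len k = γ e * G.len e := by
        rw [Finset.sum_eq_single e]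
        · rw [if_pos rfl, one_mul]
        · intro k _ hk
          rw [if_neg hk, zero_mul, zero_mul]
        · intro h
          exact absurd (Finset.mem_univ e) h
      calc ∑ k, ((if k = e then (1 : ℝ) else 0) - μ k) * γ k * G.len k
          = (∑ k, (if k = e then (1 : ℝ) else 0) * γ k * G.len k)
            - ∑ k, μ k * γ k * G.len k := by
            rw [← Finset.sum_sub_distrib]
            exact Finset.sum_congr rfl fun k _ => by ring
        _ = 0 := by rw [hδ, hmain γ hγ, sub_self]
    have hsub : ∀ γ : G.E → ℝ, G.IsCycle γ →
        ∑ k, (μ k - β k) * γ k * G.len k = 0 := by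
      intro γ hγ
      have h1 := horth γ hγ
      rw [WGraph.ip] at h1
      have h2 := hμorth γ hγ
      calc ∑ k, (μ k - β k) * γ k * G.len k
          = (∑ k, ((if k = e then (1 : ℝ) else 0) - β k) * γ k * G.len k)
            - ∑ k, ((if k = e then (1 : ℝ) else 0) - μ k) * γ k * G.len k := by
            rw [← Finset.sum_sub_distrib]
            exact Finset.sum_congr rfl fun k _ => by ring
        _ = 0 := by rw [h1, h2, sub_self]
    have hcycd : G.IsCycle (fun k => μ k - β k) := hμcyc.sub' G hcyc
    have hzero := hsub _ hcycd
    intro k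
    have h8 : ∀ m ∈ (Finset.univ : Finset G.E),
        0 ≤ (μ m - β m) * (μ m - β m) * G.len m :=
      fun m _ => mul_nonneg (mul_self_nonneg _) (G.len_pos m).le
    have h9 := (Finset.sum_eq_zero_iff_of_nonneg h8).mp hzero k (Finset.mem_univ k)
    have hl := G.len_pos k
    have h10 : (μ k - β k) * (μ k - β k) = 0 := by
      rcases mul_eq_zero.mp h9 with h | h
      · exact h
      · exact absurd h hl.ne'
    have h11 := mul_self_eq_zero.mp h10
    linarith
  -- the spanning tree formula for β e
  have hβe : β e = (1 / G.wG) *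
      ∑ T : Finset G.E, if G.IsSpanningTree T ∧ e ∉ T then G.wt T else 0 := by
    rw [hβμ e, hμdef]
    dsimp only
    congr 1
    refine Finset.sum_congr rfl fun T _ => ?_
    by_cases h : G.IsSpanningTree T ∧ e ∉ T
    · rw [if_pos h, if_pos h, G.fc_self h.1 h.2, mul_one]
    · rw [if_neg h, if_neg h]
  -- nonnegativity of β e
  have hβe_nonneg : 0 ≤ β e := by
    rw [hβe]
    refine mul_nonneg (by positivity) (Finset.sum_nonneg fun T _ => ?_)
    split
    · exact G.wt_nonneg T
    · exact le_refl 0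
  refine ⟨⟨⟨e, abs_of_nonneg hβe_nonneg⟩, ?_⟩, hβe⟩
  rintro v ⟨j, rfl⟩
  -- |β j| ≤ β e
  show |β j| ≤ β e
  rw [hβμ j, hβe, hμdef]
  dsimp only
  rw [abs_mul, abs_of_nonneg (by positivity : (0:ℝ) ≤ 1 / G.wG)]
  refine mul_le_mul_of_nonneg_left ?_ (by positivity)
  calc |∑ T : Finset G.E, if G.IsSpanningTree T ∧ e ∉ T then G.wt T * G.fc T e j else 0|
      ≤ ∑ T : Finset G.E, |if G.IsSpanningTree T ∧ e ∉ T then G.wt T * G.fc T e j else 0| :=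
        Finset.abs_sum_le_sum_abs _ _
    _ ≤ ∑ T : Finset G.E, if G.IsSpanningTree T ∧ e ∉ T then G.wt T else 0 := by
        refine Finset.sum_le_sum fun T _ => ?_
        by_cases h : G.IsSpanningTree T ∧ e ∉ T
        · rw [if_pos h, if_pos h, abs_mul, abs_of_nonneg (G.wt_nonneg T)]
          calc G.wt T * |G.fc T e j| ≤ G.wt T * 1 :=
                mul_le_mul_of_nonneg_left (G.fc_bound h.1 h.2 j) (G.wt_nonneg T)
            _ = G.wt T := mul_one _
        · rw [if_neg h, if_neg h, abs_zero]
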